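/- Let α_1, β_1, α_2, β_2 > 0, let g(α_1,β_1,α_2,β_2) = ∫_0^1 f(x;α_1,β_1) I_x(α_2,β_2) dx and h(α_1,β_1,α_2,β_2) = B(α_1+α_2, β_1+β_2)/(B(α_1,β_1) B(α_2,β_2)). Then g(α_1, β_1, α_2+1, β_2) = g(α_1,β_1,α_2,β_2) − h(α_1,β_1,α_2,β_2)/α_2. -/

import Mathlib

open MeasureTheory Real Set
open intervalIntegral

/-- The Beta function `B(a,b) = ∫₀¹ t^(a-1) (1-t)^(b-1) dt`. -/
noncomputable def betaFn (a b : ℝ) : ℝ :=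
  ∫ t in (0:ℝ)..1, t ^ (a - 1) * (1 - t) ^ (b - 1)

/-- The Beta(a,b) probability density on `[0,1]`. -/
noncomputable def betaPdf (a b : ℝ) (x : ℝ) : ℝ :=
  x ^ (a - 1) * (1 - x) ^ (b - 1) / betaFn a b

/-- The cumulative distribution function of Beta(a,b). -/
noncomputable def betaCdf (a b : ℝ) (x : ℝ) : ℝ :=
  (∫ t in (0:ℝ)..x, t ^ (a - 1) * (1 - t) ^ (b - 1)) / betaFn a b

/-- `g(α₁,β₁,α₂,β₂)`: the probability that an independent Beta(α₁,β₁) sample exceeds an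
independent Beta(α₂,β₂) sample. -/
noncomputable def probG (a₁ b₁ a₂ b₂ : ℝ) : ℝ :=
  ∫ x in (0:ℝ)..1, betaPdf a₁ b₁ x * betaCdf a₂ b₂ x

/-- `h(α₁,β₁,α₂,β₂) = B(α₁+α₂,β₁+β₂)/(B(α₁,β₁) B(α₂,β₂))`. -/
noncomputable def probH (a₁ b₁ a₂ b₂ : ℝ) : ℝ :=
  betaFn (a₁ + a₂) (b₁ + b₂) / (betaFn a₁ b₁ * betaFn a₂ b₂)

lemma betaInt (a b : ℝ) (ha : 0 < a) (hb : 0 < b) {x y : ℝ} (hx : x ∈ Icc (0:ℝ) 1)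
    (hy : y ∈ Icc (0:ℝ) 1) :
    IntervalIntegrable (fun t : ℝ => t ^ (a - 1) * (1 - t) ^ (b - 1)) volume x y := by
  have h1 : IntervalIntegrable (fun t : ℝ => t ^ (a - 1) * (1 - t) ^ (b - 1)) volume 0 (1/2) := by
    apply (intervalIntegrable_rpow' (by linarith)).mul_continuousOn
    apply ContinuousOn.rpow_const (by fun_prop)
    intro t ht
    rw [uIcc_of_le (by norm_num)] at ht
    exact Or.inl (fun h => by linarith [sub_eq_zero.mp h, ht.2])
  have h2 : IntervalIntegrable (fun t : ℝ => t ^ (a - 1) * (1 - t) ^ (b - 1)) volume (1/2) 1 := by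
    have h : IntervalIntegrable (fun t : ℝ => (1 - t) ^ (b - 1)) volume (1/2) 1 := by
      have := (intervalIntegrable_rpow' (r := b - 1) (by linarith) (a := 0) (b := 1/2)).comp_sub_left 1
      norm_num at this; exact this.symm
    apply h.continuousOn_mul
    apply ContinuousOn.rpow_const (by fun_prop)
    intro t ht
    rw [uIcc_of_le (by norm_num)] at ht
    exact Or.inl (fun h' => by rw [h'] at ht; linarith [ht.1])
  have h01 : IntervalIntegrable (fun t : ℝ => t ^ (a - 1) * (1 - t) ^ (b - 1)) volume 0 1 :=
    h1.trans h2
  apply h01.mono_set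
  rw [uIcc_of_le (by norm_num : (0:ℝ) ≤ 1)]
  exact uIcc_subset_Icc hx hy

lemma betaFTC (a b : ℝ) (ha : 0 < a) (hb : 0 < b) {x : ℝ} (hx : x ∈ Icc (0:ℝ) 1) :
    x ^ a * (1 - x) ^ b
      = a * (∫ t in (0:ℝ)..x, t ^ (a - 1) * (1 - t) ^ (b - 1))
        - (a + b) * (∫ t in (0:ℝ)..x, t ^ a * (1 - t) ^ (b - 1)) := by
  set f' : ℝ → ℝ := fun t => a * (t ^ (a - 1) * (1 - t) ^ (b - 1))
      - (a + b) * (t ^ a * (1 - t) ^ (b - 1)) with hf'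
  have hI1 : IntervalIntegrable (fun t : ℝ => t ^ (a - 1) * (1 - t) ^ (b - 1)) volume 0 x :=
    betaInt a b ha hb (by norm_num) hx
  have hI2 : IntervalIntegrable (fun t : ℝ => t ^ a * (1 - t) ^ (b - 1)) volume 0 x := by
    have := betaInt (a + 1) b (by linarith) hb (x := 0) (y := x) (by norm_num) hx
    simpa using this
  have hint : IntervalIntegrable f' volume 0 x := (hI1.const_mul a).sub (hI2.const_mul (a + b))
  have hcont : ContinuousOn (fun t : ℝ => t ^ a * (1 - t) ^ b) (Icc 0 x) := by
    apply ContinuousOn.mul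
    · exact ContinuousOn.rpow_const (by fun_prop) fun t _ => Or.inr ha.le
    · exact ContinuousOn.rpow_const (by fun_prop) fun t _ => Or.inr hb.le
  have hderiv : ∀ t ∈ Ioo (0:ℝ) x, HasDerivAt (fun t : ℝ => t ^ a * (1 - t) ^ b) (f' t) t := by
    intro t ht
    have ht0 : (0:ℝ) < t := ht.1
    have ht1 : t < 1 := lt_of_lt_of_le ht.2 hx.2
    have h1 : HasDerivAt (fun t : ℝ => t ^ a) (a * t ^ (a - 1)) t :=
      Real.hasDerivAt_rpow_const (Or.inl ht0.ne')
    have h2 : HasDerivAt (fun t : ℝ => (1 - t) ^ b) (-1 * b * (1 - t) ^ (b - 1)) t := by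
      have hd : HasDerivAt (fun t : ℝ => 1 - t) (-1) t := by
        simpa using (hasDerivAt_id t).const_sub 1
      exact hd.rpow_const (Or.inl (by linarith))
    have e1 : (1 - t) ^ b = (1 - t) ^ (b - 1) * (1 - t) := by
      rw [← Real.rpow_add_one (by linarith : (1:ℝ) - t ≠ 0) (b - 1)]; norm_num
    have e2 : t ^ a = t ^ (a - 1) * t := by
      rw [← Real.rpow_add_one ht0.ne' (a - 1)]; norm_num
    have heq : f' t = a * t ^ (a - 1) * (1 - t) ^ b + t ^ a * (-1 * b * (1 - t) ^ (b - 1)) := by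
      simp only [hf']; rw [e1, e2]; ring
    exact heq ▸ (h1.mul h2)
  have key := intervalIntegral.integral_eq_sub_of_hasDerivAt_of_le hx.1 hcont hderiv hint
  rw [intervalIntegral.integral_sub (hI1.const_mul a) (hI2.const_mul (a + b)),
    intervalIntegral.integral_const_mul, intervalIntegral.integral_const_mul] at key
  rw [Real.zero_rpow ha.ne'] at key
  linarith [key]

lemma betaFn_pos (a b : ℝ) (ha : 0 < a) (hb : 0 < b) : 0 < betaFn a b := by
  apply intervalIntegral.intervalIntegral_pos_of_pos_on
    (betaInt a b ha hb (by norm_num) (by norm_num))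
  · intro t ht
    exact mul_pos (Real.rpow_pos_of_pos ht.1 _) (Real.rpow_pos_of_pos (by linarith [ht.2]) _)
  · norm_num

lemma betaFn_succ (a b : ℝ) (ha : 0 < a) (hb : 0 < b) :
    (a + b) * betaFn (a + 1) b = a * betaFn a b := by
  have := betaFTC a b ha hb (x := 1) (by norm_num)
  rw [Real.one_rpow, sub_self, Real.zero_rpow hb.ne', one_mul] at this
  have e : betaFn (a + 1) b = ∫ t in (0:ℝ)..1, t ^ a * (1 - t) ^ (b - 1) := by
    unfold betaFn; norm_num
  rw [e]; unfold betaFn; linarith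

lemma betaCdf_succ (a b : ℝ) (ha : 0 < a) (hb : 0 < b) {x : ℝ} (hx : x ∈ Icc (0:ℝ) 1) :
    betaCdf (a + 1) b x = betaCdf a b x - x ^ a * (1 - x) ^ b / (a * betaFn a b) := by
  have hB := betaFn_pos a b ha hb
  have hB' := betaFn_pos (a + 1) b (by linarith) hb
  have hftc := betaFTC a b ha hb hx
  have hsucc := betaFn_succ a b ha hb
  have e : betaCdf (a + 1) b x
      = (∫ t in (0:ℝ)..x, t ^ a * (1 - t) ^ (b - 1)) / betaFn (a + 1) b := by
    unfold betaCdf; norm_num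
  rw [e]
  unfold betaCdf
  have hab : a + b ≠ 0 := by positivity
  field_simp
  linear_combination (betaFn (a + 1) b) * hftc
    - (∫ t in (0:ℝ)..x, t ^ a * (1 - t) ^ (b - 1)) * hsucc

/-- Recurrence: incrementing α₂ by one. -/
theorem probG_alpha2_succ (a₁ b₁ a₂ b₂ : ℝ)
    (hα₁ : 0 < a₁) (hβ₁ : 0 < b₁) (hα₂ : 0 < a₂) (hβ₂ : 0 < b₂) :
    probG a₁ b₁ (a₂ + 1) b₂ = probG a₁ b₁ a₂ b₂ - probH a₁ b₁ a₂ b₂ / a₂ := by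
  have hB₁ := betaFn_pos a₁ b₁ hα₁ hβ₁
  have hB₂ := betaFn_pos a₂ b₂ hα₂ hβ₂
  have hpdfInt : IntervalIntegrable (betaPdf a₁ b₁) volume 0 1 := by
    have := (betaInt a₁ b₁ hα₁ hβ₁ (x := 0) (y := 1) (by norm_num) (by norm_num)).div_const
      (betaFn a₁ b₁)
    exact this
  have step1 : probG a₁ b₁ (a₂ + 1) b₂
      = ∫ x in (0:ℝ)..1, (betaPdf a₁ b₁ x * betaCdf a₂ b₂ x
        - betaPdf a₁ b₁ x * (x ^ a₂ * (1 - x) ^ b₂ / (a₂ * betaFn a₂ b₂))) := by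
    unfold probG
    apply intervalIntegral.integral_congr
    intro x hx
    rw [uIcc_of_le (by norm_num : (0:ℝ) ≤ 1)] at hx
    simp only
    rw [betaCdf_succ a₂ b₂ hα₂ hβ₂ hx]
    ring
  have hA : IntervalIntegrable (fun x => betaPdf a₁ b₁ x * betaCdf a₂ b₂ x) volume 0 1 := by
    apply hpdfInt.mul_continuousOn
    have := continuousOn_primitive_interval'
      (betaInt a₂ b₂ hα₂ hβ₂ (x := 0) (y := 1) (by norm_num) (by norm_num))
      (left_mem_uIcc (a := (0:ℝ)) (b := 1))
    exact ContinuousOn.div_const this (betaFn a₂ b₂)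
  have hB : IntervalIntegrable
      (fun x => betaPdf a₁ b₁ x * (x ^ a₂ * (1 - x) ^ b₂ / (a₂ * betaFn a₂ b₂))) volume 0 1 := by
    apply hpdfInt.mul_continuousOn
    apply ContinuousOn.div_const
    exact ContinuousOn.mul
      (ContinuousOn.rpow_const (by fun_prop) fun t _ => Or.inr hα₂.le)
      (ContinuousOn.rpow_const (by fun_prop) fun t _ => Or.inr hβ₂.le)
  rw [step1, intervalIntegral.integral_sub hA hB]
  have step4 : (∫ x in (0:ℝ)..1, betaPdf a₁ b₁ x * (x ^ a₂ * (1 - x) ^ b₂ / (a₂ * betaFn a₂ b₂)))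
      = ∫ x in (0:ℝ)..1, x ^ (a₁ + a₂ - 1) * (1 - x) ^ (b₁ + b₂ - 1)
          * (1 / (betaFn a₁ b₁ * (a₂ * betaFn a₂ b₂))) := by
    apply intervalIntegral.integral_congr_ae
    have hne : ∀ᵐ x : ℝ, x ≠ 1 := by
      refine (MeasureTheory.ae_iff.mpr ?_)
      simp [Real.volume_singleton]
    filter_upwards [hne] with x hx1 hx
    rw [uIoc_of_le (by norm_num : (0:ℝ) ≤ 1)] at hx
    have hx0 : 0 < x := hx.1
    have hx1' : x < 1 := lt_of_le_of_ne hx.2 hx1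
    have e1 : x ^ (a₁ + a₂ - 1) = x ^ (a₁ - 1) * x ^ a₂ := by
      rw [← Real.rpow_add hx0]; ring_nf
    have e2 : (1 - x) ^ (b₁ + b₂ - 1) = (1 - x) ^ (b₁ - 1) * (1 - x) ^ b₂ := by
      rw [← Real.rpow_add (by linarith)]; ring_nf
    rw [betaPdf, e1, e2]
    ring
  rw [step4, intervalIntegral.integral_mul_const]
  have : (∫ x in (0:ℝ)..1, x ^ (a₁ + a₂ - 1) * (1 - x) ^ (b₁ + b₂ - 1))
      = betaFn (a₁ + a₂) (b₁ + b₂) := rfl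
  rw [this]
  unfold probG probH
  field_simp
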